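/- Every positive-definite real binary quadratic form is GL₂(ℤ)-equivalent to a unique reduced form, where Q' is reduced if its coefficients (q₁₁, q₂₂, q₁₂) satisfy q₂₂ ≥ q₁₁ ≥ q₁₂ ≥ 0 and q₁₁ > 0. -/

import Mathlib

private def Equ (a b c A B C : ℝ) : Prop :=
  ∃ p q r s : ℤ, (p * s - q * r = 1 ∨ p * s - q * r = -1) ∧
    ∀ x y : ℝ, a * x ^ 2 + b * x * y + c * y ^ 2 =
      A * ((p : ℝ) * x + q * y) ^ 2
        + B * ((p : ℝ) * x + q * y) * ((r : ℝ) * x + s * y)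
        + C * ((r : ℝ) * x + s * y) ^ 2

private lemma equ_pull (a b c : ℝ) (p q r s : ℤ) (h : p * s - q * r = 1) :
    Equ a b c (a*(p:ℝ)^2 + b*p*r + c*r^2) (2*a*p*q + b*((p:ℝ)*s+(q:ℝ)*r) + 2*c*r*s)
      (a*(q:ℝ)^2 + b*q*s + c*s^2) := by
  refine ⟨s, -q, -r, p, Or.inl (by linarith), ?_⟩
  intro x y
  have hd : ((p:ℝ)*s - (q:ℝ)*r) = 1 := by exact_mod_cast h
  push_cast
  linear_combination (-(a*x^2+b*x*y+c*y^2) * (((p:ℝ)*s - (q:ℝ)*r) + 1)) * hd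

private lemma equ_congr {a b c A B C A' B' C' : ℝ} (hA : A = A') (hB : B = B') (hC : C = C')
    (h : Equ a b c A B C) : Equ a b c A' B' C' := by
  rw [← hA, ← hB, ← hC]; exact h

private lemma equ_flip (a b c : ℝ) : Equ a b c a (-b) c := by
  refine ⟨1, 0, 0, -1, Or.inr (by norm_num), ?_⟩
  intro x y; push_cast; ring

private lemma equ_symm {a b c A B C : ℝ} (h : Equ a b c A B C) : Equ A B C a b c := by
  obtain ⟨p, q, r, s, hdet, h⟩ := h
  rcases hdet with hd | hd
  · refine ⟨s, -q, -r, p, Or.inl (by linarith), ?_⟩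
    intro x y
    have hdr : ((p:ℝ)*s - (q:ℝ)*r) = 1 := by exact_mod_cast hd
    have h2 := h ((s:ℝ)*x - (q:ℝ)*y) (-(r:ℝ)*x + (p:ℝ)*y)
    push_cast
    linear_combination (-h2) + (-(A*x^2+B*x*y+C*y^2) * (((p:ℝ)*(s:ℝ)-(q:ℝ)*(r:ℝ)) + 1)) * hdr
  · refine ⟨-s, q, r, -p, Or.inr (by linarith), ?_⟩
    intro x y
    have hdr : ((p:ℝ)*s - (q:ℝ)*r) = -1 := by exact_mod_cast hd
    have h2 := h (-(s:ℝ)*x + (q:ℝ)*y) ((r:ℝ)*x - (p:ℝ)*y)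
    push_cast
    linear_combination (-h2) + ((A*x^2+B*x*y+C*y^2) * (1 - ((p:ℝ)*(s:ℝ)-(q:ℝ)*(r:ℝ)))) * hdr

private lemma equ_trans {a b c A B C A' B' C' : ℝ} (h1 : Equ a b c A B C)
    (h2 : Equ A B C A' B' C') : Equ a b c A' B' C' := by
  obtain ⟨p1, q1, r1, s1, hd1, h1⟩ := h1
  obtain ⟨p2, q2, r2, s2, hd2, h2⟩ := h2
  refine ⟨p2*p1 + q2*r1, p2*q1 + q2*s1, r2*p1 + s2*r1, r2*q1 + s2*s1, ?_, ?_⟩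
  · have : (p2*p1 + q2*r1) * (r2*q1 + s2*s1) - (p2*q1 + q2*s1) * (r2*p1 + s2*r1)
        = (p2*s2 - q2*r2) * (p1*s1 - q1*r1) := by ring
    rcases hd1 with e1 | e1 <;> rcases hd2 with e2 | e2 <;> rw [e1, e2] at this <;>
      [left; right; right; left] <;> omega
  · intro x y
    have g2 := h2 ((p1:ℝ)*x + (q1:ℝ)*y) ((r1:ℝ)*x + (s1:ℝ)*y)
    push_cast
    linear_combination (h1 x y) + g2

private lemma equ_c_value {a b c A B C : ℝ} (h : Equ a b c A B C) :
    ∃ u v : ℤ, ¬(u = 0 ∧ v = 0) ∧ C = a*(u:ℝ)^2 + b*u*v + c*v^2 := by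
  obtain ⟨p, q, r, s, hdet, hid⟩ := equ_symm h
  refine ⟨q, s, ?_, ?_⟩
  · rintro ⟨rfl, rfl⟩; simp at hdet
  · have t := hid 0 1; linear_combination t

private lemma posQ (a b c : ℝ) (ha : 0 < a) (hd : b ^ 2 - 4 * a * c < 0) :
    ∀ x y : ℝ, ¬(x = 0 ∧ y = 0) → 0 < a * x ^ 2 + b * x * y + c * y ^ 2 := by
  intro x y hxy
  by_cases hy : y = 0
  · subst hy
    have hx : x ≠ 0 := fun h => hxy ⟨h, rfl⟩
    have : 0 < x ^ 2 := by positivity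
    nlinarith
  · have : 0 < y ^ 2 := by positivity
    nlinarith [sq_nonneg (2 * a * x + b * y)]

private lemma int_abs_le_sq (x : ℤ) : |x| ≤ x ^ 2 := by
  nlinarith [abs_nonneg x, sq_abs x]

private lemma exists_min (a b c : ℝ) (ha : 0 < a) (hc : 0 < c) (hD : 0 < 4 * a * c - b ^ 2) :
    ∃ p r : ℤ, ¬(p = 0 ∧ r = 0) ∧ ∀ x y : ℤ, ¬(x = 0 ∧ y = 0) →
      a * (p:ℝ) ^ 2 + b * p * r + c * r ^ 2 ≤ a * (x:ℝ) ^ 2 + b * x * y + c * y ^ 2 := by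
  set D := 4 * a * c - b ^ 2 with hDdef
  set N : ℤ := max 1 (max ⌈4 * c * a / D⌉ ⌈4 * a * a / D⌉) with hN
  have hN1 : 1 ≤ N := le_max_left _ _
  have bound : ∀ x y : ℤ, a * (x:ℝ) ^ 2 + b * x * y + c * y ^ 2 ≤ a →
      x ∈ Finset.Icc (-N) N ∧ y ∈ Finset.Icc (-N) N := by
    intro x y hle
    have hx2 : (x:ℝ) ^ 2 ≤ 4 * c * a / D := by
      rw [le_div_iff₀ hD]
      nlinarith [sq_nonneg (2 * c * (y:ℝ) + b * x)]
    have hy2 : (y:ℝ) ^ 2 ≤ 4 * a * a / D := by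
      rw [le_div_iff₀ hD]
      nlinarith [sq_nonneg (2 * a * (x:ℝ) + b * y)]
    have hx2' : x ^ 2 ≤ ⌈4 * c * a / D⌉ := by
      have := Int.le_ceil (4 * c * a / D)
      exact_mod_cast hx2.trans this
    have hy2' : y ^ 2 ≤ ⌈4 * a * a / D⌉ := by
      have := Int.le_ceil (4 * a * a / D)
      exact_mod_cast hy2.trans this
    have hxN : |x| ≤ N := le_trans (int_abs_le_sq x)
      (le_trans hx2' (le_trans (le_max_left _ _) (le_max_right _ _)))
    have hyN : |y| ≤ N := le_trans (int_abs_le_sq y)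
      (le_trans hy2' (le_trans (le_max_right _ _) (le_max_right _ _)))
    constructor <;> rw [Finset.mem_Icc] <;> constructor <;>
      [linarith [neg_abs_le x, le_abs_self x]; linarith [neg_abs_le x, le_abs_self x];
       linarith [neg_abs_le y, le_abs_self y]; linarith [neg_abs_le y, le_abs_self y]]
  set S : Finset (ℤ × ℤ) :=
    (Finset.Icc (-N) N ×ˢ Finset.Icc (-N) N).filter (fun v => ¬(v.1 = 0 ∧ v.2 = 0)) with hS
  have h10 : ((1, 0) : ℤ × ℤ) ∈ S := by
    simp [hS, Finset.mem_filter, Finset.mem_Icc]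
    omega
  obtain ⟨⟨p, r⟩, hmem, hmin⟩ := Finset.exists_min_image S
    (fun v => a * (v.1 : ℝ) ^ 2 + b * v.1 * v.2 + c * v.2 ^ 2) ⟨(1, 0), h10⟩
  have hpr : ¬(p = 0 ∧ r = 0) := (Finset.mem_filter.mp hmem).2
  refine ⟨p, r, hpr, ?_⟩
  intro x y hxy
  have hma : a * (p:ℝ) ^ 2 + b * p * r + c * r ^ 2 ≤ a := by
    have := hmin (1, 0) h10
    simpa using this
  by_cases hle : a * (x:ℝ) ^ 2 + b * x * y + c * y ^ 2 ≤ a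
  · have hxyb := bound x y hle
    have : (x, y) ∈ S := by
      rw [hS, Finset.mem_filter]
      exact ⟨Finset.mem_product.mpr ⟨hxyb.1, hxyb.2⟩, hxy⟩
    exact hmin (x, y) this
  · push_neg at hle
    linarith

private lemma red_min_c (a b c : ℝ) (hb0 : 0 ≤ b) (hba : b ≤ a) (hac : a ≤ c) (x y : ℤ)
    (hy : y ≠ 0) : c ≤ a * (x:ℝ) ^ 2 + b * x * y + c * y ^ 2 := by
  have ha0 : 0 ≤ a := le_trans hb0 hba
  have hc0 : 0 ≤ c := le_trans ha0 hac
  have hxy : -(|(x:ℝ)| * |(y:ℝ)|) ≤ (x:ℝ) * y := by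
    rw [← abs_mul]; exact neg_abs_le _
  have hx2 : |(x:ℝ)| ^ 2 = (x:ℝ) ^ 2 := sq_abs _
  have hy2 : |(y:ℝ)| ^ 2 = (y:ℝ) ^ 2 := sq_abs _
  have hY1 : (1:ℝ) ≤ |(y:ℝ)| := by
    rw [← Int.cast_abs]
    exact_mod_cast Int.one_le_abs hy
  have hX0 : 0 ≤ |(x:ℝ)| := abs_nonneg _
  have hY0 : 0 ≤ |(y:ℝ)| := abs_nonneg _
  have t4 : 0 ≤ b * ((x:ℝ) * y + |(x:ℝ)| * |(y:ℝ)|) := mul_nonneg hb0 (by linarith)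
  rcases le_or_gt |y| |x| with hc1 | hc1
  · have hc1' : |(y:ℝ)| ≤ |(x:ℝ)| := by
      rw [← Int.cast_abs, ← Int.cast_abs]; exact_mod_cast hc1
    have t1 : 0 ≤ a * (|(x:ℝ)| * (|(x:ℝ)| - |(y:ℝ)|)) :=
      mul_nonneg ha0 (mul_nonneg hX0 (by linarith))
    have t2 : 0 ≤ (a - b) * (|(x:ℝ)| * |(y:ℝ)|) :=
      mul_nonneg (by linarith) (mul_nonneg hX0 hY0)
    have t3 : 0 ≤ c * (|(y:ℝ)| ^ 2 - 1) := mul_nonneg hc0 (by nlinarith)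
    nlinarith [t1, t2, t3, t4]
  · have hc1' : |(x:ℝ)| + 1 ≤ |(y:ℝ)| := by
      rw [← Int.cast_abs, ← Int.cast_abs]
      exact_mod_cast hc1
    have t5 : 0 ≤ (c - b) * (|(x:ℝ)| * |(y:ℝ)|) :=
      mul_nonneg (by linarith) (mul_nonneg hX0 hY0)
    have t6 : 0 ≤ c * (|(y:ℝ)| * (|(y:ℝ)| - |(x:ℝ)| - 1)) :=
      mul_nonneg hc0 (mul_nonneg hY0 (by linarith))
    have t7 : 0 ≤ c * (|(y:ℝ)| - 1) := mul_nonneg hc0 (by linarith)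
    have t8 : 0 ≤ a * |(x:ℝ)| ^ 2 := mul_nonneg ha0 (sq_nonneg _)
    nlinarith [t4, t5, t6, t7, t8]

private lemma red_min_a (a b c : ℝ) (hb0 : 0 ≤ b) (hba : b ≤ a) (hac : a ≤ c) (x y : ℤ)
    (hxy : ¬(x = 0 ∧ y = 0)) :
    a ≤ a * (x:ℝ) ^ 2 + b * x * y + c * y ^ 2 := by
  by_cases hy : y = 0
  · subst hy
    have hx : x ≠ 0 := fun h => hxy ⟨h, rfl⟩
    have h1 : (1:ℝ) ≤ (x:ℝ) ^ 2 := by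
      have : 1 ≤ x ^ 2 := by nlinarith [Int.one_le_abs hx, int_abs_le_sq x, abs_nonneg x]
      exact_mod_cast this
    have ha0 : 0 ≤ a := le_trans hb0 hba
    push_cast
    nlinarith [mul_nonneg ha0 (sub_nonneg.mpr h1)]
  · linarith [red_min_c a b c hb0 hba hac x y hy]

private lemma uniq (a₁ b₁ c₁ a₂ b₂ c₂ : ℝ)
    (h10 : 0 ≤ b₁) (h1ba : b₁ ≤ a₁) (h1ac : a₁ ≤ c₁) (h1a : 0 < a₁)
    (h20 : 0 ≤ b₂) (h2ba : b₂ ≤ a₂) (h2ac : a₂ ≤ c₂) (h2a : 0 < a₂)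
    (h : Equ a₁ b₁ c₁ a₂ b₂ c₂) : a₁ = a₂ ∧ b₁ = b₂ ∧ c₁ = c₂ := by
  obtain ⟨p, q, r, s, hdet, hid⟩ := h
  have E1 : a₁ = a₂*(p:ℝ)^2 + b₂*(p:ℝ)*(r:ℝ) + c₂*(r:ℝ)^2 := by
    have t := hid 1 0; linear_combination t
  have E2 : c₁ = a₂*(q:ℝ)^2 + b₂*(q:ℝ)*(s:ℝ) + c₂*(s:ℝ)^2 := by
    have t := hid 0 1; linear_combination t
  have E3 : b₁ = 2*a₂*(p:ℝ)*(q:ℝ) + b₂*((p:ℝ)*(s:ℝ) + (q:ℝ)*(r:ℝ)) + 2*c₂*(r:ℝ)*(s:ℝ) := by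
    have t := hid 1 1; linear_combination t - E1 - E2
  have hd2 : ((p:ℝ)*(s:ℝ) - (q:ℝ)*(r:ℝ))^2 = 1 := by
    rcases hdet with h' | h' <;>
      · have : ((p:ℝ)*(s:ℝ) - (q:ℝ)*(r:ℝ)) = (((p*s - q*r : ℤ)):ℝ) := by push_cast; ring
        rw [this, h']; norm_num
  have F1 : a₂ = a₁*(s:ℝ)^2 - b₁*(r:ℝ)*(s:ℝ) + c₁*(r:ℝ)^2 := by
    linear_combination (-(s:ℝ)^2)*E1 + ((r:ℝ)*(s:ℝ))*E3 + (-(r:ℝ)^2)*E2 - a₂*hd2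
  have hpr : ¬(p = 0 ∧ r = 0) := by
    rintro ⟨rfl, rfl⟩; simp at hdet
  have hsr : ¬(s = 0 ∧ (-r) = 0) := by
    rintro ⟨rfl, hr⟩
    have hr0 : r = 0 := by omega
    subst hr0; simp at hdet
  have i1 : a₂ ≤ a₁ := by
    have := red_min_a a₂ b₂ c₂ h20 h2ba h2ac p r hpr
    linarith [E1]
  have i2 : a₁ ≤ a₂ := by
    have := red_min_a a₁ b₁ c₁ h10 h1ba h1ac s (-r) hsr
    push_cast at this
    nlinarith [F1]
  have ga : a₁ = a₂ := le_antisymm i2 i1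
  by_cases hr : r = 0
  · subst hr
    have hps : p * s = 1 ∨ p * s = -1 := by simpa using hdet
    have hp : p = 1 ∨ p = -1 := by
      rcases hps with h' | h'
      · exact Int.isUnit_iff.mp (IsUnit.of_mul_eq_one (a := p) s h')
      · exact Int.isUnit_iff.mp (IsUnit.of_mul_eq_one (a := p) (-s) (by linear_combination -h'))
    have hs : s = 1 ∨ s = -1 := by
      rcases hps with h' | h'
      · exact Int.isUnit_iff.mp (IsUnit.of_mul_eq_one (a := s) p (by linear_combination h'))
      · exact Int.isUnit_iff.mp (IsUnit.of_mul_eq_one (a := s) (-p) (by linear_combination -h'))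
    rcases hp with rfl | rfl <;> rcases hs with rfl | rfl <;>
      push_cast at E2 E3 <;>
      (have hqu : q ≤ 1 := by
         by_contra h'
         push_neg at h'
         have h2q : (2:ℝ) ≤ (q:ℝ) := by exact_mod_cast h'
         have := mul_le_mul_of_nonneg_left h2q h2a.le
         linarith
       have hql : -1 ≤ q := by
         by_contra h'
         push_neg at h'
         have h2q : (q:ℝ) ≤ -2 := by exact_mod_cast (by omega : q ≤ -2)
         have := mul_le_mul_of_nonneg_left h2q h2a.le
         linarith
       interval_cases q <;> push_cast at E2 E3 <;>
         exact ⟨ga, by linarith, by linarith⟩)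
  · have hc2 : c₂ = a₁ := by
      have := red_min_c a₂ b₂ c₂ h20 h2ba h2ac p r hr
      have h2 : c₂ ≤ a₁ := by linarith [E1]
      linarith
    have hc1 : c₁ = a₁ := by
      have := red_min_c a₁ b₁ c₁ h10 h1ba h1ac s (-r) (by omega)
      push_cast at this
      have h2 : c₁ ≤ a₂ := by nlinarith [F1]
      linarith
    have hdisc : b₁^2 - 4*a₁*c₁ = b₂^2 - 4*a₂*c₂ := by
      linear_combination (b₁ + (2*a₂*(p:ℝ)*(q:ℝ) + b₂*((p:ℝ)*(s:ℝ) + (q:ℝ)*(r:ℝ))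
          + 2*c₂*(r:ℝ)*(s:ℝ)))*E3
        - 4*c₁*E1 - 4*(a₂*(p:ℝ)^2 + b₂*(p:ℝ)*(r:ℝ) + c₂*(r:ℝ)^2)*E2 + (b₂^2 - 4*a₂*c₂)*hd2
    have hbb : (b₁ - b₂) * (b₁ + b₂) = 0 := by
      linear_combination hdisc + 4*a₁*hc1 - 4*a₂*hc2 + 4*a₁*ga
    rcases mul_eq_zero.mp hbb with h' | h'
    · exact ⟨ga, by linarith, by linarith [hc1, hc2]⟩
    · exact ⟨ga, by linarith, by linarith [hc1, hc2]⟩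

theorem unique_reduced_form (a c b : ℝ) (ha : 0 < a) (hd : b ^ 2 - 4 * a * c < 0) :
    ∃! T : ℝ × ℝ × ℝ,
      (T.2.1 ≥ T.1 ∧ T.1 ≥ T.2.2 ∧ T.2.2 ≥ 0 ∧ 0 < T.1) ∧
      ∃ p q r s : ℤ, (p * s - q * r = 1 ∨ p * s - q * r = -1) ∧
        ∀ x y : ℝ, a * x ^ 2 + b * x * y + c * y ^ 2 =
          T.1 * ((p : ℝ) * x + q * y) ^ 2
            + T.2.2 * ((p : ℝ) * x + q * y) * ((r : ℝ) * x + s * y)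
            + T.2.1 * ((r : ℝ) * x + s * y) ^ 2 := by
  have hc : 0 < c := by nlinarith
  have hD : 0 < 4 * a * c - b ^ 2 := by nlinarith
  obtain ⟨p, r, hpr, hmin⟩ := exists_min a b c ha hc hD
  set m := a * (p:ℝ) ^ 2 + b * p * r + c * r ^ 2 with hm
  have hm0 : 0 < m := by
    apply posQ a b c ha hd
    rintro ⟨hp0, hr0⟩
    exact hpr ⟨by exact_mod_cast hp0, by exact_mod_cast hr0⟩
  -- the minimizing vector is primitive
  have hgcd : Int.gcd p r = 1 := by
    set g : ℤ := (Int.gcd p r : ℤ) with hgdef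
    obtain ⟨p', hp'⟩ := (Int.gcd_dvd_left p r : g ∣ p)
    obtain ⟨r', hr'⟩ := (Int.gcd_dvd_right p r : g ∣ r)
    have hpr' : ¬(p' = 0 ∧ r' = 0) := by
      rintro ⟨rfl, rfl⟩
      simp at hp' hr'
      exact hpr ⟨hp', hr'⟩
    have hle := hmin p' r' hpr'
    by_contra hne
    have hg0 : Int.gcd p r ≠ 0 := by
      intro h0
      exact hpr ⟨(Int.gcd_eq_zero_iff.mp h0).1, (Int.gcd_eq_zero_iff.mp h0).2⟩
    have hg2 : 2 ≤ g := by rw [hgdef]; omega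
    have hg2R : (2:ℝ) ≤ (g : ℝ) := by exact_mod_cast hg2
    have hp2 : p = g * p' := hp'
    have hr2 : r = g * r' := hr'
    clear_value g
    have hmeq : m = ((g:ℤ):ℝ)^2 * (a*(p':ℝ)^2 + b*p'*r' + c*r'^2) := by
      rw [hm, hp2, hr2]; push_cast; ring
    have hQ0 : 0 < a*(p':ℝ)^2 + b*p'*r' + c*r'^2 := lt_of_lt_of_le hm0 hle
    have h4 : (4:ℝ) ≤ (g:ℝ)^2 := by nlinarith
    have h5 : 4*(a*(p':ℝ)^2 + b*p'*r' + c*r'^2) ≤ (g:ℝ)^2 * (a*(p':ℝ)^2 + b*p'*r' + c*r'^2) :=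
      mul_le_mul_of_nonneg_right h4 hQ0.le
    linarith
  -- Bezout
  have hb := Int.gcd_eq_gcd_ab p r
  rw [hgcd] at hb
  set s0 : ℤ := Int.gcdA p r with hs0
  set q0 : ℤ := -(Int.gcdB p r) with hq0
  have hdet1 : p * s0 - q0 * r = 1 := by
    rw [hs0, hq0]; linear_combination -hb
  have st1 := equ_pull a b c p q0 r s0 hdet1
  set B1 := 2*a*(p:ℝ)*(q0:ℝ) + b*((p:ℝ)*(s0:ℝ)+(q0:ℝ)*(r:ℝ)) + 2*c*(r:ℝ)*(s0:ℝ) with hB1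
  set C1 := a*(q0:ℝ)^2 + b*(q0:ℝ)*(s0:ℝ) + c*(s0:ℝ)^2 with hC1
  have st1' : Equ a b c m B1 C1 := by
    apply equ_congr ?_ ?_ ?_ st1 <;> (try rfl) <;> (push_cast [hm, hB1, hC1]; ring)
  -- shear
  set u := B1 / (2*m) with hu
  set k : ℤ := -(round u) with hk
  have st2 := equ_pull m B1 C1 1 k 0 1 (by ring)
  set B2 := B1 + 2*m*(k:ℝ) with hB2
  set C2 := m*(k:ℝ)^2 + B1*(k:ℝ) + C1 with hC2
  have st2' : Equ m B1 C1 m B2 C2 := by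
    apply equ_congr ?_ ?_ ?_ st2 <;> (try rfl) <;> (push_cast [hB2, hC2]; ring)
  have st12 : Equ a b c m B2 C2 := equ_trans st1' st2'
  -- |B2| ≤ m
  have habs : |B2| ≤ m := by
    have h1 := abs_sub_round u
    have h2 : B2 = (2*m) * (u - round u) := by
      rw [hB2, hu, hk]
      push_cast
      field_simp
      ring
    rw [h2, abs_mul, abs_of_pos (by linarith : (0:ℝ) < 2*m)]
    nlinarith [h1, hm0]
  -- flip if needed
  have hfin : ∃ B3 : ℝ, 0 ≤ B3 ∧ B3 ≤ m ∧ Equ a b c m B3 C2 := by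
    rcases le_or_gt 0 B2 with hB | hB
    · exact ⟨B2, hB, by rw [abs_of_nonneg hB] at habs; exact habs, st12⟩
    · refine ⟨-B2, by linarith, by rw [abs_of_neg hB] at habs; exact habs, ?_⟩
      exact equ_trans st12 (equ_flip m B2 C2)
  obtain ⟨B3, hB30, hB3m, stF⟩ := hfin
  have hcm : m ≤ C2 := by
    obtain ⟨u', v', huv, hval⟩ := equ_c_value stF
    rw [hval]
    exact hmin u' v' huv
  refine ⟨(m, C2, B3), ⟨⟨hcm, hB3m, hB30, hm0⟩, stF⟩, ?_⟩
  rintro ⟨A', C', B'⟩ ⟨⟨r1, r2, r3, r4⟩, hE⟩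
  have hEq : Equ a b c A' B' C' := hE
  have := uniq A' B' C' m B3 C2 r3 r2 r1 r4 hB30 hB3m hcm hm0
    (equ_trans (equ_symm hEq) stF)
  obtain ⟨e1, e2, e3⟩ := this
  simp only [Prod.mk.injEq]
  exact ⟨e1, e3, e2⟩
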